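/- For every minimal conformation of length N > 6, its type sequence is admissible: it is a contiguous subword (factor) of some finite concatenation of copies of the words α = →1→2←2←1 and β = →1←1. -/

import Mathlib

/-- Points of the cubic lattice `ℤ³`. -/
abbrev P3 : Type := Fin 3 → ℤ

def e1 : P3 := ![1, 0, 0]
def e2 : P3 := ![0, 1, 0]
def e3 : P3 := ![0, 0, 1]

/-- Squared Euclidean norm of an integer vector; it equals `1` iff the
Euclidean norm equals `1`. -/
def sqNorm (v : P3) : ℤ := ∑ k, (v k) ^ 2

/-- A conformation of length `N`: an injective map on `{1, …, N}` whose
consecutive steps have Euclidean length one. -/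
def IsConformation (N : ℕ) (Γ : ℕ → P3) : Prop :=
  Set.InjOn Γ (Set.Icc 1 N) ∧ ∀ i, 1 ≤ i → i < N → sqNorm (Γ (i + 1) - Γ i) = 1

/-- A lattice rotation: an orthogonal integer matrix of determinant one
(equivalently, a linear isometry of `ℝ³` mapping `ℤ³` onto `ℤ³` with
determinant one). -/
def IsLatticeRotation (R : Matrix (Fin 3) (Fin 3) ℤ) : Prop :=
  R.transpose * R = 1 ∧ R.det = 1

/-- Equivalence of length-5 conformations: `Δ' k = R (Δ k) + t` for a lattice
rotation `R` and translation `t ∈ ℤ³`. -/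
def Equiv5 (Δ Δ' : Fin 5 → P3) : Prop :=
  ∃ (R : Matrix (Fin 3) (Fin 3) ℤ) (t : P3),
    IsLatticeRotation R ∧ ∀ k, Δ' k = R.mulVec (Δ k) + t

/-- Reversal of a length-5 conformation (`k ↦ Δ (6 - k)` in 1-based indexing). -/
def rev5 (Δ : Fin 5 → P3) : Fin 5 → P3 := fun k => Δ k.rev

/-- Conformation 1: vertices (0,0,0), (1,0,0), (1,1,0), (0,1,0), (0,1,1). -/
def conf1 : Fin 5 → P3 := ![![0, 0, 0], ![1, 0, 0], ![1, 1, 0], ![0, 1, 0], ![0, 1, 1]]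

/-- Conformation 2: vertices (0,0,0), (0,1,0), (−1,1,0), (−1,1,1), (−1,0,1). -/
def conf2 : Fin 5 → P3 := ![![0, 0, 0], ![0, 1, 0], ![-1, 1, 0], ![-1, 1, 1], ![-1, 0, 1]]

/-- The `i`-th window of `Γ`: the 5-tuple `(Γ(i-2), …, Γ(i+2))`. -/
def window (Γ : ℕ → P3) (i : ℕ) : Fin 5 → P3 := fun k => Γ (i - 2 + (k : ℕ))

/-- `Φ(Δ) = 1`: the 5-tuple `Δ` or its reversal is equivalent to
conformation 1 or to conformation 2. -/
def WindowGood (Δ : Fin 5 → P3) : Prop :=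
  Equiv5 Δ conf1 ∨ Equiv5 (rev5 Δ) conf1 ∨ Equiv5 Δ conf2 ∨ Equiv5 (rev5 Δ) conf2

open Classical in
/-- The function `Φ` on length-5 conformations. -/
noncomputable def Phi (Δ : Fin 5 → P3) : ℤ := if WindowGood Δ then 1 else 0

/-- The energy `E₅(Γ) = −Σ_{i=3}^{N−2} Φ(Γ_i)`. -/
noncomputable def E5 (N : ℕ) (Γ : ℕ → P3) : ℤ :=
  -∑ i ∈ Finset.Icc 3 (N - 2), Phi (window Γ i)

/-- A minimal conformation: a conformation all of whose windows satisfy `Φ = 1`. -/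
def IsMinimal (N : ℕ) (Γ : ℕ → P3) : Prop :=
  IsConformation N Γ ∧ ∀ i, 3 ≤ i → i ≤ N - 2 → WindowGood (window Γ i)

/-- The walk starting at the origin (in 1-based indexing) whose steps
cyclically repeat the given list. -/
def cyclicWalk (steps : List P3) : ℕ → P3
  | 0 => 0
  | 1 => 0
  | n + 2 => cyclicWalk steps (n + 1) + steps.getD (n % steps.length) 0

/-- The 16-term step sequence of the lattice α-helix. -/
def alphaStepList : List P3 :=
  [e1, e2, -e1, e3, -e2, e1, e2, e3, -e1, -e2, e1, e3, e2, -e1, -e2, e3]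

/-- The 4-term step sequence of the lattice β-strand. -/
def betaStepList : List P3 := [e1, e2, -e1, e3]

/-- The lattice α-helix (`H(1) = 0`, steps cyclically repeating `alphaStepList`). -/
def alphaHelix : ℕ → P3 := cyclicWalk alphaStepList

/-- The lattice β-strand (`B(1) = 0`, steps cyclically repeating `betaStepList`). -/
def betaStrand : ℕ → P3 := cyclicWalk betaStepList

/-- The four directed types of windows. -/
inductive DType : Type
  | r1  -- →1
  | l1  -- ←1
  | r2  -- →2
  | l2  -- ←2
deriving DecidableEq

/-- A window `Δ` has directed type `→1` (resp. `→2`) if it is equivalent to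
conformation 1 (resp. 2), and `←1` (resp. `←2`) if its reversal is. -/
def HasType (Δ : Fin 5 → P3) : DType → Prop
  | DType.r1 => Equiv5 Δ conf1
  | DType.l1 => Equiv5 (rev5 Δ) conf1
  | DType.r2 => Equiv5 Δ conf2
  | DType.l2 => Equiv5 (rev5 Δ) conf2

/-- The six allowed ordered pairs of directed types of consecutive windows:
(→1,←1), (←1,→1), (→1,→2), (→2,←2), (←2,←1), (←2,→2). -/
def allowedPairs : List (DType × DType) :=
  [(DType.r1, DType.l1), (DType.l1, DType.r1), (DType.r1, DType.r2),
   (DType.r2, DType.l2), (DType.l2, DType.l1), (DType.l2, DType.r2)]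

/-- `w` is the type sequence of `Γ` (a conformation of length `N`):
`w` has length `N − 4` and its `j`-th letter is the directed type of the
window `Γ_{3+j}`, `j = 0, …, N−5`. -/
def HasTypeSeq (N : ℕ) (Γ : ℕ → P3) (w : List DType) : Prop :=
  w.length = N - 4 ∧ ∀ j (h : j < w.length), HasType (window Γ (3 + j)) (w.get ⟨j, h⟩)

/-- The word `α = →1→2←2←1`. -/
def wordAlpha : List DType := [DType.r1, DType.r2, DType.l2, DType.l1]

/-- The word `β = →1←1`. -/
def wordBeta : List DType := [DType.r1, DType.l1]

/-- `v` is a finite concatenation of copies of the words `α` and `β`. -/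
def IsABConcat (v : List DType) : Prop :=
  ∃ L : List (List DType), (∀ u ∈ L, u = wordAlpha ∨ u = wordBeta) ∧ v = L.flatten

/-- A word is admissible if it is a contiguous subword (factor) of some finite
concatenation of copies of `α` and `β`. -/
def Admissible (w : List DType) : Prop := ∃ v, IsABConcat v ∧ w <:+: v

/-- The two kinds of monomers. -/
inductive AB : Type
  | A
  | B
deriving DecidableEq

/-- The number of occurrences of the letter `c` in the `i`-th 5-tuple
`S(i−2), …, S(i+2)` of the sequence `S`. -/
def countLetter (c : AB) (S : ℕ → AB) (i : ℕ) : ℕ :=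
  ((Finset.Icc (i - 2) (i + 2)).filter fun k => S k = c).card

open Classical in
/-- `Φ₁(Δ) = 1` iff `Δ` or its reversal is equivalent to conformation 1. -/
noncomputable def Phi1 (Δ : Fin 5 → P3) : ℝ :=
  if Equiv5 Δ conf1 ∨ Equiv5 (rev5 Δ) conf1 then 1 else 0

open Classical in
/-- `Φ₂(Δ) = 1` iff `Δ` or its reversal is equivalent to conformation 2. -/
noncomputable def Phi2 (Δ : Fin 5 → P3) : ℝ :=
  if Equiv5 Δ conf2 ∨ Equiv5 (rev5 Δ) conf2 then 1 else 0

/-- The heteropolymer energy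
`E₅′(S,Γ) = −Σᵢ [#_B(Sᵢ)(Φ₁(Γᵢ) + ε Φ₂(Γᵢ)) + #_A(Sᵢ)(Φ₂(Γᵢ) + ε Φ₁(Γᵢ))]`. -/
noncomputable def E5' (ε : ℝ) (S : ℕ → AB) (N : ℕ) (Γ : ℕ → P3) : ℝ :=
  -∑ i ∈ Finset.Icc 3 (N - 2),
    ((countLetter AB.B S i : ℝ) * (Phi1 (window Γ i) + ε * Phi2 (window Γ i)) +
      (countLetter AB.A S i : ℝ) * (Phi2 (window Γ i) + ε * Phi1 (window Γ i)))

/-! ### Auxiliary development -/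

open Matrix DType List

/-- Step patterns of the four directed types. -/
def qpat : DType → Fin 4 → P3
  | .r1 => ![e1, e2, -e1, e3]
  | .l1 => ![-e3, e1, -e2, -e1]
  | .r2 => ![e2, -e1, e3, -e2]
  | .l2 => ![e2, -e3, e1, -e2]

lemma equiv_steps {Δ C : Fin 5 → P3} (h : Equiv5 Δ C) :
    ∃ Q, IsLatticeRotation Q ∧ ∀ j j' : Fin 5, Δ j - Δ j' = Q.mulVec (C j - C j') := by
  obtain ⟨R, tv, ⟨hO, hD⟩, hE⟩ := h
  refine ⟨Rᵀ, ⟨by rw [Matrix.transpose_transpose]; exact mul_eq_one_comm.mp hO,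
    by rw [Matrix.det_transpose]; exact hD⟩, fun j j' => ?_⟩
  have h1 : C j - C j' = R.mulVec (Δ j - Δ j') := by
    rw [hE j, hE j', Matrix.mulVec_sub]; abel
  rw [h1, Matrix.mulVec_mulVec, hO, Matrix.one_mulVec]

lemma hasType_steps {Δ : Fin 5 → P3} {t : DType} (h : HasType Δ t) :
    ∃ Q, IsLatticeRotation Q ∧
      ∀ k : Fin 4, Δ k.succ - Δ k.castSucc = Q.mulVec (qpat t k) := by
  cases t with
  | r1 =>
    have hq : ∀ k : Fin 4, conf1 k.succ - conf1 k.castSucc = qpat .r1 k := by decide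
    obtain ⟨Q, hQ, hs⟩ := equiv_steps h
    exact ⟨Q, hQ, fun k => by rw [hs k.succ k.castSucc, hq k]⟩
  | r2 =>
    have hq : ∀ k : Fin 4, conf2 k.succ - conf2 k.castSucc = qpat .r2 k := by decide
    obtain ⟨Q, hQ, hs⟩ := equiv_steps h
    exact ⟨Q, hQ, fun k => by rw [hs k.succ k.castSucc, hq k]⟩
  | l1 =>
    have hq : ∀ k : Fin 4, conf1 k.succ.rev - conf1 k.castSucc.rev = qpat .l1 k := by decide
    obtain ⟨Q, hQ, hs⟩ := equiv_steps h
    refine ⟨Q, hQ, fun k => ?_⟩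
    have hk := hs k.succ.rev k.castSucc.rev
    simp only [rev5, Fin.rev_rev] at hk
    rw [hk, hq k]
  | l2 =>
    have hq : ∀ k : Fin 4, conf2 k.succ.rev - conf2 k.castSucc.rev = qpat .l2 k := by decide
    obtain ⟨Q, hQ, hs⟩ := equiv_steps h
    refine ⟨Q, hQ, fun k => ?_⟩
    have hk := hs k.succ.rev k.castSucc.rev
    simp only [rev5, Fin.rev_rev] at hk
    rw [hk, hq k]

lemma window_steps {Γ : ℕ → P3} {i : ℕ} {t : DType} (h : HasType (window Γ i) t) :
    ∃ Q, IsLatticeRotation Q ∧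
      (Γ (i - 2 + 1) - Γ (i - 2) = Q.mulVec (qpat t 0) ∧
       Γ (i - 2 + 2) - Γ (i - 2 + 1) = Q.mulVec (qpat t 1) ∧
       Γ (i - 2 + 3) - Γ (i - 2 + 2) = Q.mulVec (qpat t 2) ∧
       Γ (i - 2 + 4) - Γ (i - 2 + 3) = Q.mulVec (qpat t 3)) := by
  obtain ⟨Q, hQ, hs⟩ := hasType_steps h
  refine ⟨Q, hQ, ?_, ?_, ?_, ?_⟩
  · simpa [window] using hs 0
  · simpa [window] using hs 1
  · simpa [window] using hs 2
  · simpa [window] using hs 3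

/-- Triple determinant (rows). -/
def tdet (a b c : P3) : ℤ := (Matrix.of ![a, b, c]).det

lemma rot_dot {Q : Matrix (Fin 3) (Fin 3) ℤ} (hQ : IsLatticeRotation Q) (u v : P3) :
    (Q.mulVec u) ⬝ᵥ (Q.mulVec v) = u ⬝ᵥ v := by
  rw [Matrix.dotProduct_mulVec, ← Matrix.mulVec_transpose, Matrix.mulVec_mulVec, hQ.1,
    Matrix.one_mulVec]

lemma rot_tdet {Q : Matrix (Fin 3) (Fin 3) ℤ} (hQ : IsLatticeRotation Q) (a b c : P3) :
    tdet (Q.mulVec a) (Q.mulVec b) (Q.mulVec c) = tdet a b c := by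
  have key : Matrix.of ![Q.mulVec a, Q.mulVec b, Q.mulVec c] = Matrix.of ![a, b, c] * Qᵀ := by
    ext i j
    fin_cases i <;>
      simp [Matrix.mul_apply, Matrix.mulVec, dotProduct, Fin.sum_univ_three, mul_comm]
  rw [tdet, key, Matrix.det_mul, Matrix.det_transpose, hQ.2, mul_one, tdet]

lemma qpat_pair {t t' : DType}
    (h1 : qpat t 1 ⬝ᵥ qpat t 2 = qpat t' 0 ⬝ᵥ qpat t' 1)
    (h2 : qpat t 2 ⬝ᵥ qpat t 3 = qpat t' 1 ⬝ᵥ qpat t' 2)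
    (h3 : qpat t 1 ⬝ᵥ qpat t 3 = qpat t' 0 ⬝ᵥ qpat t' 2)
    (h4 : tdet (qpat t 1) (qpat t 2) (qpat t 3) = tdet (qpat t' 0) (qpat t' 1) (qpat t' 2)) :
    (t, t') ∈ allowedPairs := by
  cases t <;> cases t' <;> revert h1 h2 h3 h4 <;> decide

lemma adjacent_pairs {Γ : ℕ → P3} {i : ℕ} (hi : 3 ≤ i) {t t' : DType}
    (h : HasType (window Γ i) t) (h' : HasType (window Γ (i + 1)) t') :
    (t, t') ∈ allowedPairs := by
  obtain ⟨Q, hQ, E1, E2, E3, E4⟩ := window_steps h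
  obtain ⟨Q', hQ', F1, F2, F3, _⟩ := window_steps h'
  rw [show i + 1 - 2 = i - 2 + 1 by omega] at F1 F2 F3
  rw [show i - 2 + 1 + 1 = i - 2 + 2 by omega] at F1
  rw [show i - 2 + 1 + 2 = i - 2 + 3 by omega] at F2
  rw [show i - 2 + 1 + 3 = i - 2 + 4 by omega] at F3
  have d1 : Q.mulVec (qpat t 1) = Q'.mulVec (qpat t' 0) := E2.symm.trans F1
  have d2 : Q.mulVec (qpat t 2) = Q'.mulVec (qpat t' 1) := E3.symm.trans F2
  have d3 : Q.mulVec (qpat t 3) = Q'.mulVec (qpat t' 2) := E4.symm.trans F3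
  refine qpat_pair ?_ ?_ ?_ ?_
  · rw [← rot_dot hQ, d1, d2, rot_dot hQ']
  · rw [← rot_dot hQ, d2, d3, rot_dot hQ']
  · rw [← rot_dot hQ, d1, d3, rot_dot hQ']
  · rw [← rot_tdet hQ, d1, d2, d3, rot_tdet hQ']

/-- `t` is one of the two "type 2" letters. -/
def isC (t : DType) : Prop := t = DType.r2 ∨ t = DType.l2

lemma qpat_anti {t : DType} (h : isC t) : qpat t 3 = -qpat t 0 := by
  rcases h with h | h <;> subst h <;> decide

lemma no_triple {N : ℕ} {Γ : ℕ → P3} (hconf : IsConformation N Γ) {i : ℕ}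
    (hi : 3 ≤ i) (hiN : i + 4 ≤ N) {t t' t'' : DType}
    (ht : HasType (window Γ i) t) (ht' : HasType (window Γ (i + 1)) t')
    (ht'' : HasType (window Γ (i + 2)) t'')
    (hc : isC t ∧ isC t' ∧ isC t'') : False := by
  obtain ⟨Q, hQ, E1, E2, E3, E4⟩ := window_steps ht
  obtain ⟨Q', hQ', F1, _, _, F4⟩ := window_steps ht'
  obtain ⟨Q'', hQ'', G1, _, _, G4⟩ := window_steps ht''
  rw [show i + 1 - 2 = i - 2 + 1 by omega] at F1 F4
  rw [show i - 2 + 1 + 1 = i - 2 + 2 by omega] at F1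
  rw [show i - 2 + 1 + 4 = i - 2 + 5 by omega, show i - 2 + 1 + 3 = i - 2 + 4 by omega] at F4
  rw [show i + 2 - 2 = i - 2 + 2 by omega] at G1 G4
  rw [show i - 2 + 2 + 1 = i - 2 + 3 by omega] at G1
  rw [show i - 2 + 2 + 4 = i - 2 + 6 by omega, show i - 2 + 2 + 3 = i - 2 + 5 by omega] at G4
  have D4 : Γ (i - 2 + 4) - Γ (i - 2 + 3) = -(Γ (i - 2 + 1) - Γ (i - 2)) := by
    rw [E4, E1, qpat_anti hc.1, Matrix.mulVec_neg]
  have D5 : Γ (i - 2 + 5) - Γ (i - 2 + 4) = -(Γ (i - 2 + 2) - Γ (i - 2 + 1)) := by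
    rw [F4, F1, qpat_anti hc.2.1, Matrix.mulVec_neg]
  have D6 : Γ (i - 2 + 6) - Γ (i - 2 + 5) = -(Γ (i - 2 + 3) - Γ (i - 2 + 2)) := by
    rw [G4, G1, qpat_anti hc.2.2, Matrix.mulVec_neg]
  have hEq : Γ (i - 2 + 6) = Γ (i - 2) := by linear_combination (norm := ring_nf) D4 + D5 + D6
  have := hconf.1 (show i - 2 + 6 ∈ Set.Icc 1 N by simp only [Set.mem_Icc]; omega)
    (show i - 2 ∈ Set.Icc 1 N by simp only [Set.mem_Icc]; omega) hEq
  omega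
/-! ### Combinatorics -/

def pairs5 : List (DType × DType) :=
  [(DType.r1, DType.l1), (DType.l1, DType.r1), (DType.r1, DType.r2),
   (DType.r2, DType.l2), (DType.l2, DType.l1)]

def R5 (a b : DType) : Prop := (a, b) ∈ pairs5

instance : DecidableRel R5 := fun a b => by unfold R5; infer_instance

lemma concat_append {v v' : List DType} (h : IsABConcat v) (h' : IsABConcat v') :
    IsABConcat (v ++ v') := by
  obtain ⟨L, hL, rfl⟩ := h
  obtain ⟨L', hL', rfl⟩ := h'
  refine ⟨L ++ L', fun u hu => ?_, (List.flatten_append (L₁ := L) (L₂ := L')).symm⟩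
  rcases List.mem_append.mp hu with h | h
  exacts [hL u h, hL' u h]

/-- Any `R5`-chain starting with `r1` extends on the right to an αβ-concatenation. -/
lemma chain_completion : ∀ n (w : List DType), w.length ≤ n →
    List.Chain' R5 (DType.r1 :: w) → ∃ suf, IsABConcat (DType.r1 :: (w ++ suf)) := by
  intro n
  induction n with
  | zero =>
    intro w hw _
    have hw0 : w = [] := List.eq_nil_of_length_eq_zero (Nat.le_zero.mp hw)
    subst hw0
    exact ⟨[DType.l1], ⟨[wordBeta], by simp, rfl⟩⟩
  | succ n ih =>
    intro w hw hc
    match w with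
    | [] => exact ⟨[DType.l1], ⟨[wordBeta], by simp, rfl⟩⟩
    | a :: rest =>
      have ha : R5 DType.r1 a := (List.isChain_cons_cons.mp hc).1
      have hcr : List.Chain' R5 (a :: rest) := (List.isChain_cons_cons.mp hc).2
      have ha' : a = DType.l1 ∨ a = DType.r2 := by cases a <;> revert ha <;> decide
      rcases ha' with rfl | rfl
      · -- r1 :: l1 :: rest
        match rest with
        | [] => exact ⟨[], ⟨[wordBeta], by simp, rfl⟩⟩
        | b :: rest' =>
          have hb : R5 DType.l1 b := (List.isChain_cons_cons.mp hcr).1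
          have hb' : b = DType.r1 := by cases b <;> revert hb <;> decide
          subst hb'
          obtain ⟨suf, hsuf⟩ := ih rest' (by simp at hw ⊢; omega) (List.isChain_cons_cons.mp hcr).2
          obtain ⟨L, hL, hfl⟩ := hsuf
          refine ⟨suf, wordBeta :: L, fun u hu => ?_, ?_⟩
          · rcases List.mem_cons.mp hu with h | h
            exacts [Or.inr h, hL u h]
          · simp [wordBeta, ← hfl]
      · -- r1 :: r2 :: rest
        match rest with
        | [] => exact ⟨[DType.l2, DType.l1], ⟨[wordAlpha], by simp, rfl⟩⟩
        | b :: rest' =>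
          have hb : R5 DType.r2 b := (List.isChain_cons_cons.mp hcr).1
          have hb' : b = DType.l2 := by cases b <;> revert hb <;> decide
          subst hb'
          have hcr' : List.Chain' R5 (DType.l2 :: rest') := (List.isChain_cons_cons.mp hcr).2
          match rest' with
          | [] => exact ⟨[DType.l1], ⟨[wordAlpha], by simp, rfl⟩⟩
          | c :: rest'' =>
            have hcc : R5 DType.l2 c := (List.isChain_cons_cons.mp hcr').1
            have hc' : c = DType.l1 := by cases c <;> revert hcc <;> decide
            subst hc'
            have hcr'' : List.Chain' R5 (DType.l1 :: rest'') := (List.isChain_cons_cons.mp hcr').2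
            match rest'' with
            | [] => exact ⟨[], ⟨[wordAlpha], by simp, rfl⟩⟩
            | d :: rest''' =>
              have hd : R5 DType.l1 d := (List.isChain_cons_cons.mp hcr'').1
              have hd' : d = DType.r1 := by cases d <;> revert hd <;> decide
              subst hd'
              obtain ⟨suf, hsuf⟩ := ih rest''' (by simp at hw ⊢; omega)
                (List.isChain_cons_cons.mp hcr'').2
              obtain ⟨L, hL, hfl⟩ := hsuf
              refine ⟨suf, wordAlpha :: L, fun u hu => ?_, ?_⟩
              · rcases List.mem_cons.mp hu with h | h
                exacts [Or.inl h, hL u h]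
              · simp [wordAlpha, ← hfl]

/-- Any nonempty `R5`-chain extends on the left to start with `r1`. -/
lemma chain_left_ext (a : DType) (w : List DType) (hc : List.Chain' R5 (a :: w)) :
    ∃ pre rest, pre ++ (a :: w) = DType.r1 :: rest ∧ List.Chain' R5 (DType.r1 :: rest) := by
  cases a with
  | r1 => exact ⟨[], w, rfl, hc⟩
  | l1 => exact ⟨[DType.r1], _, rfl, List.isChain_cons_cons.mpr ⟨by decide, hc⟩⟩
  | r2 => exact ⟨[DType.r1], _, rfl, List.isChain_cons_cons.mpr ⟨by decide, hc⟩⟩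
  | l2 =>
    exact ⟨[DType.r1, DType.r2], _, rfl,
      List.isChain_cons_cons.mpr ⟨by decide, List.isChain_cons_cons.mpr ⟨by decide, hc⟩⟩⟩

lemma chain_admissible (a : DType) (w : List DType) (hc : List.Chain' R5 (a :: w)) :
    Admissible (a :: w) := by
  obtain ⟨pre, rest, hpre, hc'⟩ := chain_left_ext a w hc
  obtain ⟨suf, hsuf⟩ := chain_completion rest.length rest le_rfl hc'
  refine ⟨DType.r1 :: (rest ++ suf), hsuf, pre, suf, ?_⟩
  have h2 : (pre ++ (a :: w)) ++ suf = (DType.r1 :: rest) ++ suf := by rw [hpre]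
  simpa using h2
open Classical in
/-- Pick a type for a good window. -/
noncomputable def typeOf (Δ : Fin 5 → P3) : DType :=
  if Equiv5 Δ conf1 then DType.r1
  else if Equiv5 (rev5 Δ) conf1 then DType.l1
  else if Equiv5 Δ conf2 then DType.r2
  else DType.l2

lemma typeOf_hasType {Δ : Fin 5 → P3} (h : WindowGood Δ) : HasType Δ (typeOf Δ) := by
  unfold typeOf
  split_ifs with h1 h2 h3
  · exact h1
  · exact h2
  · exact h3
  · rcases h with h | h | h | h
    · exact absurd h h1
    · exact absurd h h2
    · exact absurd h h3
    · exact h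
/-- the type sequence of any minimal conformation of length
`N > 6` is admissible: it is a contiguous subword of some finite concatenation
of copies of the words `α = →1→2←2←1` and `β = →1←1`. -/
theorem minimal_type_sequence_admissible (N : ℕ) (hN : 6 < N) (Γ : ℕ → P3)
    (hΓ : IsMinimal N Γ) :
    (∃ w, HasTypeSeq N Γ w) ∧ ∀ w, HasTypeSeq N Γ w → Admissible w := by
  constructor
  · refine ⟨List.ofFn (fun j : Fin (N - 4) => typeOf (window Γ (3 + (j : ℕ)))), by simp, ?_⟩
    intro j hj
    have hj' : j < N - 4 := by simpa using hj
    have hg : (List.ofFn (fun j : Fin (N - 4) => typeOf (window Γ (3 + (j : ℕ))))).get ⟨j, hj⟩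
        = typeOf (window Γ (3 + j)) := by
      rw [List.get_ofFn]; rfl
    rw [hg]

    exact typeOf_hasType (hΓ.2 (3 + j) (by omega) (by omega))
  · rintro w ⟨hlen, hget⟩
    have hw3 : 3 ≤ w.length := by omega
    have hP6 : ∀ j (h : j + 1 < w.length),
        (w.get ⟨j, by omega⟩, w.get ⟨j + 1, h⟩) ∈ allowedPairs := by
      intro j h
      have h1 := hget j (by omega)
      have h2 := hget (j + 1) h
      rw [show 3 + (j + 1) = (3 + j) + 1 from rfl] at h2
      exact adjacent_pairs (by omega) h1 h2
    have hT : ∀ j (h : j + 2 < w.length),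
        ¬(isC (w.get ⟨j, by omega⟩) ∧ isC (w.get ⟨j + 1, by omega⟩) ∧
          isC (w.get ⟨j + 2, h⟩)) := by
      intro j h hcon
      have h1 := hget j (by omega)
      have h2 := hget (j + 1) (by omega)
      have h3 := hget (j + 2) h
      rw [show 3 + (j + 1) = (3 + j) + 1 from rfl] at h2
      rw [show 3 + (j + 2) = (3 + j) + 2 from rfl] at h3
      exact no_triple hΓ.1 (by omega) (by omega) h1 h2 h3 hcon
    have hP5 : ∀ j (h : j + 1 < w.length), R5 (w.get ⟨j, by omega⟩) (w.get ⟨j + 1, h⟩) := by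
      intro j h
      have hp := hP6 j h
      have key : ∀ p ∈ allowedPairs, p ∈ pairs5 ∨ (p.1 = DType.l2 ∧ p.2 = DType.r2) := by
        decide
      rcases key _ hp with hk | ⟨hk1, hk2⟩
      · exact hk
      · exfalso
        cases j with
        | zero =>
          have hp1 := hP6 1 (by omega)
          have key2 : ∀ p ∈ allowedPairs, p.1 = DType.r2 → p.2 = DType.l2 := by decide
          have hx := key2 _ hp1 hk2
          exact hT 0 (by omega) ⟨Or.inr hk1, Or.inl hk2, Or.inr hx⟩
        | succ jj =>
          have hp0 := hP6 jj (by omega)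
          have key3 : ∀ p ∈ allowedPairs, p.2 = DType.l2 → p.1 = DType.r2 := by decide
          have hx := key3 _ hp0 hk1
          exact hT jj (by omega) ⟨Or.inl hx, Or.inr hk1, Or.inl hk2⟩
    have hchain : List.Chain' R5 w := List.isChain_iff_getElem.mpr (fun i h => hP5 i (by omega))
    cases w with
    | nil => exact absurd hw3 (by simp)
    | cons a w' => exact chain_admissible a w' hchain
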